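/- Third difference operator formula (Proposition 4.2): for every Schwartz function κ : ℝ⁴ → ℂ, every Schwartz function h : ℝ → ℂ, every λ ∈ ℝ \ {0}, μ ∈ ℝ, and u ∈ ℝ, one has (π_{λ,μ}(x₃κ)h)(u) = (i/λ)[(π_{λ,μ}(x₂κ)(v ↦ −iλv·h(v)))(u) + (π_{λ,μ}(κ)h')(u) − d/du (π_{λ,μ}(κ)h)(u)], i.e. Δ_{x₃}π_{λ,μ}(κ) = (i/λ)(Δ_{x₂}π_{λ,μ}(κ)π_{λ,μ}(X₃) + π_{λ,μ}(κ)π_{λ,μ}(X₁) − π_{λ,μ}(X₁)π_{λ,μ}(κ)), where π_{λ,μ}(X₁) = ∂_u and π_{λ,μ}(X₃) is multiplication by −iλu. -/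

import Mathlib

open MeasureTheory Complex

noncomputable section

instance : (volume : Measure (ℝ × ℝ × ℝ)).IsAddHaarMeasure :=
  Measure.prod.instIsAddHaarMeasure volume volume

instance : (volume : Measure (ℝ × ℝ × ℝ × ℝ)).IsAddHaarMeasure :=
  Measure.prod.instIsAddHaarMeasure volume volume

/-- The group Fourier transform on the Engel group:
`(π_{λ,μ}(κ)h)(u) = ∫_{ℝ⁴} κ(x) exp(i((μ/(2λ))x₂ − λx₄ + λx₃(u−x₁) − (λ/2)x₂(u−x₁)²)) h(u−x₁) dx`. -/
def piF (lam mu : ℝ) (κ : ℝ × ℝ × ℝ × ℝ → ℂ) (h : ℝ → ℂ) (u : ℝ) : ℂ :=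
  ∫ x : ℝ × ℝ × ℝ × ℝ,
    κ x * Complex.exp (Complex.I *
      (((mu / (2 * lam)) * x.2.1 - lam * x.2.2.2 + lam * x.2.2.1 * (u - x.1)
        - (lam / 2) * x.2.1 * (u - x.1) ^ 2 : ℝ) : ℂ)) * h (u - x.1)

lemma abs_x1_le (a : ℝ × ℝ × ℝ × ℝ) : |a.1| ≤ ‖a‖ := norm_fst_le a

lemma abs_x2_le (a : ℝ × ℝ × ℝ × ℝ) : |a.2.1| ≤ ‖a‖ :=
  (norm_fst_le a.2).trans (norm_snd_le a)

lemma abs_x3_le (a : ℝ × ℝ × ℝ × ℝ) : |a.2.2.1| ≤ ‖a‖ :=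
  ((norm_fst_le a.2.2).trans (norm_snd_le a.2)).trans (norm_snd_le a)

lemma norm_exp_I_real (s : ℝ) : ‖Complex.exp (Complex.I * (s : ℂ))‖ = 1 := by
  rw [Complex.norm_exp]
  simp [Complex.mul_re]

/-- Third difference operator formula (Proposition 4.2):
`Δ_{x₃}π_{λ,μ}(κ) = (i/λ)(Δ_{x₂}π_{λ,μ}(κ)π_{λ,μ}(X₃) + π_{λ,μ}(κ)π_{λ,μ}(X₁) −
π_{λ,μ}(X₁)π_{λ,μ}(κ))`, where `π_{λ,μ}(X₁) = ∂_u`, `π_{λ,μ}(X₃)` is multiplication by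
`−iλu`, and `Δ_{x_i}π_{λ,μ}(κ) = π_{λ,μ}(x_iκ)`. -/
theorem engel_difference_operator_x3 :
    ∀ κ : SchwartzMap (ℝ × ℝ × ℝ × ℝ) ℂ, ∀ h : SchwartzMap ℝ ℂ,
      ∀ lam : ℝ, lam ≠ 0 → ∀ mu u : ℝ,
        piF lam mu (fun x => (x.2.2.1 : ℂ) * κ x) h u =
          (Complex.I / (lam : ℂ)) *
            (piF lam mu (fun x => (x.2.1 : ℂ) * κ x)
                (fun v => -Complex.I * (lam : ℂ) * (v : ℂ) * h v) u +
              piF lam mu κ (deriv (h : ℝ → ℂ)) u -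
              deriv (fun w : ℝ => piF lam mu κ h w) u) := by
  intro κ h lam hlam mu u
  -- bounds on h, v * h v, deriv h
  obtain ⟨M0, hM0pos, hM0⟩ := h.decay 0 0
  obtain ⟨M1, hM1pos, hM1⟩ := h.decay 1 0
  obtain ⟨M2, hM2pos, hM2⟩ := (SchwartzMap.derivCLM ℝ ℂ h).decay 0 0
  have hM0' : ∀ v : ℝ, ‖h v‖ ≤ M0 := by
    intro v; have := hM0 v; simpa [norm_iteratedFDeriv_zero] using this
  have hM1' : ∀ v : ℝ, |v| * ‖h v‖ ≤ M1 := by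
    intro v; have := hM1 v
    simpa [norm_iteratedFDeriv_zero, Real.norm_eq_abs] using this
  have hM2' : ∀ v : ℝ, ‖deriv (⇑h) v‖ ≤ M2 := by
    intro v; have := hM2 v
    simpa [norm_iteratedFDeriv_zero] using this
  -- the phase and integrand
  set F : ℝ → (ℝ × ℝ × ℝ × ℝ) → ℂ := fun w a =>
    κ a * Complex.exp (Complex.I *
      (((mu / (2 * lam)) * a.2.1 - lam * a.2.2.2 + lam * a.2.2.1 * (w - a.1)
        - (lam / 2) * a.2.1 * (w - a.1) ^ 2 : ℝ) : ℂ)) * h (w - a.1) with hF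
  set F' : ℝ → (ℝ × ℝ × ℝ × ℝ) → ℂ := fun w a =>
    κ a * (Complex.exp (Complex.I *
      (((mu / (2 * lam)) * a.2.1 - lam * a.2.2.2 + lam * a.2.2.1 * (w - a.1)
        - (lam / 2) * a.2.1 * (w - a.1) ^ 2 : ℝ) : ℂ)) *
      (Complex.I * ((lam * a.2.2.1 - lam * a.2.1 * (w - a.1) : ℝ) : ℂ))) * h (w - a.1)
    + κ a * Complex.exp (Complex.I *
      (((mu / (2 * lam)) * a.2.1 - lam * a.2.2.2 + lam * a.2.2.1 * (w - a.1)
        - (lam / 2) * a.2.1 * (w - a.1) ^ 2 : ℝ) : ℂ)) * deriv (⇑h) (w - a.1) with hF'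
  -- pointwise derivative in w
  have hderiv : ∀ (w : ℝ) (a : ℝ × ℝ × ℝ × ℝ), HasDerivAt (fun w' => F w' a) (F' w a) w := by
    intro w a
    have h1 : HasDerivAt (fun w' : ℝ => w' - a.1) 1 w := (hasDerivAt_id w).sub_const a.1
    have hp : HasDerivAt (fun w' : ℝ =>
        (mu / (2 * lam)) * a.2.1 - lam * a.2.2.2 + lam * a.2.2.1 * (w' - a.1)
          - (lam / 2) * a.2.1 * (w' - a.1) ^ 2)
        (lam * a.2.2.1 - lam * a.2.1 * (w - a.1)) w := by
      have h3 : HasDerivAt (fun w' : ℝ => lam * a.2.2.1 * (w' - a.1)) (lam * a.2.2.1) w := by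
        simpa using h1.const_mul (lam * a.2.2.1)
      have h4 : HasDerivAt (fun w' : ℝ => (lam / 2) * a.2.1 * (w' - a.1) ^ 2)
          (lam * a.2.1 * (w - a.1)) w := by
        have := (h1.pow 2).const_mul ((lam / 2) * a.2.1)
        convert this using 1
        · rfl
        · rfl
        · rfl
        norm_num
        ring
      have := (((hasDerivAt_const w ((mu / (2 * lam)) * a.2.1)).sub
        (hasDerivAt_const w (lam * a.2.2.2))).add h3).sub h4
      convert this using 1
      · rfl
      · rfl
      · rfl
      ring
    have hE : HasDerivAt (fun w' : ℝ => Complex.exp (Complex.I *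
        (((mu / (2 * lam)) * a.2.1 - lam * a.2.2.2 + lam * a.2.2.1 * (w' - a.1)
          - (lam / 2) * a.2.1 * (w' - a.1) ^ 2 : ℝ) : ℂ)))
        (Complex.exp (Complex.I *
        (((mu / (2 * lam)) * a.2.1 - lam * a.2.2.2 + lam * a.2.2.1 * (w - a.1)
          - (lam / 2) * a.2.1 * (w - a.1) ^ 2 : ℝ) : ℂ)) *
          (Complex.I * ((lam * a.2.2.1 - lam * a.2.1 * (w - a.1) : ℝ) : ℂ))) w :=
      (hp.ofReal_comp.const_mul Complex.I).cexp
    have hH : HasDerivAt (fun w' : ℝ => h (w' - a.1)) (deriv (⇑h) (w - a.1)) w := by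
      have hd : HasDerivAt (⇑h) (deriv (⇑h) (w - a.1)) (w - a.1) :=
        h.differentiableAt.hasDerivAt
      exact hd.comp_sub_const w a.1
    have := (hE.const_mul (κ a)).mul hH
    convert this using 1
    · rfl
    rfl
  -- uniform bound
  set bound : (ℝ × ℝ × ℝ × ℝ) → ℝ := fun a =>
    |lam| * (M0 + M1) * (‖a‖ ^ 1 * ‖κ a‖) + M2 * (‖a‖ ^ 0 * ‖κ a‖) with hbd
  have hbound_int : Integrable bound := by
    exact ((κ.integrable_pow_mul volume 1).const_mul _).add
      ((κ.integrable_pow_mul volume 0).const_mul _)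
  have hbound : ∀ (w : ℝ) (a : ℝ × ℝ × ℝ × ℝ), ‖F' w a‖ ≤ bound a := by
    intro w a
    have key : |lam * a.2.2.1 - lam * a.2.1 * (w - a.1)| * ‖h (w - a.1)‖
        ≤ |lam| * ‖a‖ * M0 + |lam| * ‖a‖ * M1 := by
      refine le_trans (mul_le_mul_of_nonneg_right (abs_sub _ _) (norm_nonneg _)) ?_
      rw [add_mul]
      gcongr ?_ + ?_
      · have h5 : |lam * a.2.2.1| ≤ |lam| * ‖a‖ := by
          rw [abs_mul]; exact mul_le_mul_of_nonneg_left (abs_x3_le a) (abs_nonneg _)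
        calc |lam * a.2.2.1| * ‖h (w - a.1)‖ ≤ (|lam| * ‖a‖) * M0 :=
              mul_le_mul h5 (hM0' _) (norm_nonneg _) (by positivity)
          _ = |lam| * ‖a‖ * M0 := by ring
      · calc |lam * a.2.1 * (w - a.1)| * ‖h (w - a.1)‖
            = (|lam| * |a.2.1|) * (|w - a.1| * ‖h (w - a.1)‖) := by
              rw [abs_mul, abs_mul]; ring
          _ ≤ (|lam| * ‖a‖) * M1 := by
              refine mul_le_mul ?_ (hM1' _) (by positivity) (by positivity)
              exact mul_le_mul_of_nonneg_left (abs_x2_le a) (abs_nonneg _)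
          _ = |lam| * ‖a‖ * M1 := by ring
    have n1 : ‖κ a * (Complex.exp (Complex.I *
        (((mu / (2 * lam)) * a.2.1 - lam * a.2.2.2 + lam * a.2.2.1 * (w - a.1)
          - (lam / 2) * a.2.1 * (w - a.1) ^ 2 : ℝ) : ℂ)) *
        (Complex.I * ((lam * a.2.2.1 - lam * a.2.1 * (w - a.1) : ℝ) : ℂ))) * h (w - a.1)‖
        ≤ ‖κ a‖ * (|lam| * ‖a‖ * M0 + |lam| * ‖a‖ * M1) := by
      simp only [norm_mul, norm_exp_I_real, Complex.norm_I, Complex.norm_real,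
        Real.norm_eq_abs, one_mul, mul_one]
      rw [mul_assoc]
      exact mul_le_mul_of_nonneg_left key (norm_nonneg _)
    have n2 : ‖κ a * Complex.exp (Complex.I *
        (((mu / (2 * lam)) * a.2.1 - lam * a.2.2.2 + lam * a.2.2.1 * (w - a.1)
          - (lam / 2) * a.2.1 * (w - a.1) ^ 2 : ℝ) : ℂ)) * deriv (⇑h) (w - a.1)‖
        ≤ ‖κ a‖ * M2 := by
      simp only [norm_mul, norm_exp_I_real, one_mul, mul_one]
      exact mul_le_mul_of_nonneg_left (hM2' _) (norm_nonneg _)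
    calc ‖F' w a‖ ≤ ‖κ a‖ * (|lam| * ‖a‖ * M0 + |lam| * ‖a‖ * M1) + ‖κ a‖ * M2 := by
          simp only [hF']
          exact (norm_add_le _ _).trans (add_le_add n1 n2)
      _ = bound a := by simp only [hbd]; ring
  -- measurability
  have contPhase : ∀ w : ℝ, Continuous (fun a : ℝ × ℝ × ℝ × ℝ =>
      ((mu / (2 * lam)) * a.2.1 - lam * a.2.2.2 + lam * a.2.2.1 * (w - a.1)
        - (lam / 2) * a.2.1 * (w - a.1) ^ 2 : ℝ)) := by
    intro w; fun_prop
  have contE : ∀ w : ℝ, Continuous (fun a : ℝ × ℝ × ℝ × ℝ =>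
      Complex.exp (Complex.I *
      (((mu / (2 * lam)) * a.2.1 - lam * a.2.2.2 + lam * a.2.2.1 * (w - a.1)
        - (lam / 2) * a.2.1 * (w - a.1) ^ 2 : ℝ) : ℂ))) := by
    intro w
    exact Complex.continuous_exp.comp
      (continuous_const.mul (Complex.continuous_ofReal.comp (contPhase w)))
  have contH : ∀ w : ℝ, Continuous (fun a : ℝ × ℝ × ℝ × ℝ => h (w - a.1)) := by
    intro w; exact h.continuous.comp (continuous_const.sub continuous_fst)
  have contH' : ∀ w : ℝ, Continuous (fun a : ℝ × ℝ × ℝ × ℝ => deriv (⇑h) (w - a.1)) := by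
    intro w
    exact (SchwartzMap.derivCLM ℝ ℂ h).continuous.comp (continuous_const.sub continuous_fst)
  have contF : ∀ w : ℝ, Continuous (F w) := by
    intro w
    exact (κ.continuous.mul (contE w)).mul (contH w)
  have contF' : ∀ w : ℝ, Continuous (F' w) := by
    intro w
    refine Continuous.add ?_ ?_
    · refine (κ.continuous.mul ((contE w).mul ?_)).mul (contH w)
      exact continuous_const.mul (Complex.continuous_ofReal.comp (by fun_prop))
    · exact (κ.continuous.mul (contE w)).mul (contH' w)
  -- integrability of F u
  have hFint : ∀ w : ℝ, Integrable (F w) := by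
    intro w
    refine Integrable.mono' ((κ.integrable_pow_mul volume 0).const_mul M0)
      (contF w).aestronglyMeasurable (Filter.Eventually.of_forall fun a => ?_)
    simp only [hF]
    rw [norm_mul, norm_mul, norm_exp_I_real, mul_one]
    calc ‖κ a‖ * ‖h (w - a.1)‖ ≤ ‖κ a‖ * M0 :=
          mul_le_mul_of_nonneg_left (hM0' _) (norm_nonneg _)
      _ = M0 * (‖a‖ ^ 0 * ‖κ a‖) := by simp [mul_comm]
  -- differentiation under the integral sign
  have main := hasDerivAt_integral_of_dominated_loc_of_deriv_le (bound := bound)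
    (F := F) (F' := F') (x₀ := u) Filter.univ_mem
    (Filter.Eventually.of_forall fun w => (contF w).aestronglyMeasurable)
    (hFint u) (contF' u).aestronglyMeasurable
    (Filter.Eventually.of_forall fun a => fun w _ => hbound w a)
    hbound_int
    (Filter.Eventually.of_forall fun a => fun w _ => hderiv w a)
  have hDeriv : deriv (fun w : ℝ => piF lam mu (⇑κ) h w) u = ∫ a, F' u a := by
    have : (fun w : ℝ => piF lam mu (⇑κ) h w) = fun w => ∫ a, F w a := rfl
    rw [this]
    exact main.2.deriv
  -- the three integrands
  set G1 : (ℝ × ℝ × ℝ × ℝ) → ℂ := fun a =>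
    ((a.2.2.1 : ℂ) * κ a) * Complex.exp (Complex.I *
      (((mu / (2 * lam)) * a.2.1 - lam * a.2.2.2 + lam * a.2.2.1 * (u - a.1)
        - (lam / 2) * a.2.1 * (u - a.1) ^ 2 : ℝ) : ℂ)) * h (u - a.1) with hG1
  set G2 : (ℝ × ℝ × ℝ × ℝ) → ℂ := fun a =>
    ((a.2.1 : ℂ) * κ a) * Complex.exp (Complex.I *
      (((mu / (2 * lam)) * a.2.1 - lam * a.2.2.2 + lam * a.2.2.1 * (u - a.1)
        - (lam / 2) * a.2.1 * (u - a.1) ^ 2 : ℝ) : ℂ)) *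
      (-Complex.I * (lam : ℂ) * ((u - a.1 : ℝ) : ℂ) * h (u - a.1)) with hG2
  set G3 : (ℝ × ℝ × ℝ × ℝ) → ℂ := fun a =>
    κ a * Complex.exp (Complex.I *
      (((mu / (2 * lam)) * a.2.1 - lam * a.2.2.2 + lam * a.2.2.1 * (u - a.1)
        - (lam / 2) * a.2.1 * (u - a.1) ^ 2 : ℝ) : ℂ)) * deriv (⇑h) (u - a.1) with hG3
  have hsplit : ∀ a, F' u a = Complex.I * (lam : ℂ) * G1 a + G2 a + G3 a := by
    intro a
    simp only [hF', hG1, hG2, hG3]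
    push_cast
    ring
  -- integrability of G1 G2 G3
  have hG1int : Integrable G1 := by
    refine Integrable.mono' ((κ.integrable_pow_mul volume 1).const_mul M0)
      ?_ (Filter.Eventually.of_forall fun a => ?_)
    · exact (((Complex.continuous_ofReal.comp (by fun_prop)).mul κ.continuous).mul
        (contE u) |>.mul (contH u)).aestronglyMeasurable
    · simp only [hG1]
      rw [norm_mul, norm_mul, norm_exp_I_real, mul_one, norm_mul]
      have : ‖((a.2.2.1 : ℝ) : ℂ)‖ ≤ ‖a‖ := by
        rw [Complex.norm_real, Real.norm_eq_abs]; exact abs_x3_le a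
      calc ‖((a.2.2.1 : ℝ) : ℂ)‖ * ‖κ a‖ * ‖h (u - a.1)‖
          ≤ (‖a‖ * ‖κ a‖) * M0 :=
            mul_le_mul (mul_le_mul_of_nonneg_right this (norm_nonneg _)) (hM0' _)
              (norm_nonneg _) (by positivity)
        _ = M0 * (‖a‖ ^ 1 * ‖κ a‖) := by ring
  have hG2int : Integrable G2 := by
    refine Integrable.mono' ((κ.integrable_pow_mul volume 1).const_mul (|lam| * M1))
      ?_ (Filter.Eventually.of_forall fun a => ?_)
    · refine ((((Complex.continuous_ofReal.comp (by fun_prop)).mul κ.continuous).mul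
        (contE u)).mul ?_).aestronglyMeasurable
      exact (continuous_const.mul
        (Complex.continuous_ofReal.comp (by fun_prop))).mul (contH u)
    · simp only [hG2]
      rw [norm_mul, norm_mul, norm_exp_I_real, mul_one, norm_mul, norm_mul, norm_mul, norm_mul]
      have e1 : ‖-Complex.I‖ = 1 := by simp
      have e2 : ‖((lam : ℝ) : ℂ)‖ = |lam| := by rw [Complex.norm_real, Real.norm_eq_abs]
      have e3 : ‖((u - a.1 : ℝ) : ℂ)‖ = |u - a.1| := by
        rw [Complex.norm_real, Real.norm_eq_abs]
      have e4 : ‖((a.2.1 : ℝ) : ℂ)‖ ≤ ‖a‖ := by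
        rw [Complex.norm_real, Real.norm_eq_abs]; exact abs_x2_le a
      rw [e1, e2, e3, one_mul]
      calc ‖((a.2.1 : ℝ) : ℂ)‖ * ‖κ a‖ * (|lam| * |u - a.1| * ‖h (u - a.1)‖)
          ≤ (‖a‖ * ‖κ a‖) * (|lam| * M1) := by
            refine mul_le_mul (mul_le_mul_of_nonneg_right e4 (norm_nonneg _)) ?_
              (by positivity) (by positivity)
            rw [mul_assoc]
            exact mul_le_mul_of_nonneg_left (hM1' _) (abs_nonneg _)
        _ = |lam| * M1 * (‖a‖ ^ 1 * ‖κ a‖) := by ring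
  have hG3int : Integrable G3 := by
    refine Integrable.mono' ((κ.integrable_pow_mul volume 0).const_mul M2)
      (((κ.continuous.mul (contE u)).mul (contH' u)).aestronglyMeasurable)
      (Filter.Eventually.of_forall fun a => ?_)
    simp only [hG3]
    rw [norm_mul, norm_mul, norm_exp_I_real, mul_one]
    calc ‖κ a‖ * ‖deriv (⇑h) (u - a.1)‖ ≤ ‖κ a‖ * M2 :=
          mul_le_mul_of_nonneg_left (hM2' _) (norm_nonneg _)
      _ = M2 * (‖a‖ ^ 0 * ‖κ a‖) := by simp [mul_comm]
  -- splitting the integral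
  have haux1 : Integrable (fun a => Complex.I * (lam : ℂ) * G1 a) volume :=
    hG1int.const_mul _
  have haux12 : Integrable (fun a => Complex.I * (lam : ℂ) * G1 a + G2 a) volume :=
    haux1.add hG2int
  have hint_split : ∫ a, F' u a = Complex.I * (lam : ℂ) * (∫ a, G1 a) + (∫ a, G2 a)
      + (∫ a, G3 a) := by
    have e : (fun a => F' u a) = fun a => Complex.I * (lam : ℂ) * G1 a + G2 a + G3 a :=
      funext hsplit
    rw [e, integral_add haux12 hG3int, integral_add haux1 hG2int, integral_const_mul]
  -- identify piF terms
  have eq1 : piF lam mu (fun x => (x.2.2.1 : ℂ) * κ x) h u = ∫ a, G1 a := rfl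
  have eq2 : piF lam mu (fun x => (x.2.1 : ℂ) * κ x)
      (fun v => -Complex.I * (lam : ℂ) * (v : ℂ) * h v) u = ∫ a, G2 a := rfl
  have eq3 : piF lam mu (⇑κ) (deriv (⇑h)) u = ∫ a, G3 a := rfl
  rw [eq1, eq2, eq3, hDeriv, hint_split]
  have hlamC : (lam : ℂ) ≠ 0 := by exact_mod_cast hlam
  field_simp
  linear_combination ((lam : ℂ) * (∫ a, G1 a)) * Complex.I_sq
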